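/- In X = ℝ², let θ_n = Σ_{k=1}^n 1/k and x_n = (cos θ_n, sin θ_n). Then (x_n) is asymptotically regular (x_n − x_{n+1} → 0) and Fejér monotone with respect to {(0,0)}, but the set of cluster points of (x_n) equals the whole unit circle. -/

import Mathlib

open Filter Topology

private lemma abs_cos_sub_cos_le (a b : ℝ) : |Real.cos a - Real.cos b| ≤ |a - b| := by
  rw [Real.cos_sub_cos]
  have h1 : |Real.sin ((a + b) / 2)| ≤ 1 := Real.abs_sin_le_one _
  have h2 : |Real.sin ((a - b) / 2)| ≤ |(a - b) / 2| := Real.abs_sin_le_abs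
  have h3 : |(a - b) / 2| = |a - b| / 2 := by rw [abs_div]; norm_num
  calc |(-2) * Real.sin ((a + b) / 2) * Real.sin ((a - b) / 2)|
      = 2 * (|Real.sin ((a + b) / 2)| * |Real.sin ((a - b) / 2)|) := by
        rw [abs_mul, abs_mul]; norm_num; ring
    _ ≤ 2 * (1 * (|a - b| / 2)) := by
        apply mul_le_mul_of_nonneg_left _ (by norm_num)
        exact mul_le_mul h1 (h3 ▸ h2) (abs_nonneg _) zero_le_one
    _ = |a - b| := by ring

private lemma abs_sin_sub_sin_le (a b : ℝ) : |Real.sin a - Real.sin b| ≤ |a - b| := by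
  rw [Real.sin_sub_sin]
  have h1 : |Real.cos ((a + b) / 2)| ≤ 1 := Real.abs_cos_le_one _
  have h2 : |Real.sin ((a - b) / 2)| ≤ |(a - b) / 2| := Real.abs_sin_le_abs
  have h3 : |(a - b) / 2| = |a - b| / 2 := by rw [abs_div]; norm_num
  calc |2 * Real.sin ((a - b) / 2) * Real.cos ((a + b) / 2)|
      = 2 * (|Real.sin ((a - b) / 2)| * |Real.cos ((a + b) / 2)|) := by
        rw [abs_mul, abs_mul]; norm_num; ring
    _ ≤ 2 * ((|a - b| / 2) * 1) := by
        apply mul_le_mul_of_nonneg_left _ (by norm_num)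
        exact mul_le_mul (h3 ▸ h2) h1 (abs_nonneg _) (by positivity)
    _ = |a - b| := by ring

private lemma norm2_le (v : EuclideanSpace ℝ (Fin 2)) : ‖v‖ ≤ |v 0| + |v 1| := by
  rw [EuclideanSpace.norm_eq, Fin.sum_univ_two]
  have h : ‖v 0‖ ^ 2 + ‖v 1‖ ^ 2 ≤ (|v 0| + |v 1|) ^ 2 := by
    simp only [Real.norm_eq_abs]
    nlinarith [abs_nonneg (v 0), abs_nonneg (v 1)]
  calc Real.sqrt (‖v 0‖ ^ 2 + ‖v 1‖ ^ 2) ≤ Real.sqrt ((|v 0| + |v 1|) ^ 2) :=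
        Real.sqrt_le_sqrt h
    _ = |v 0| + |v 1| := Real.sqrt_sq (by positivity)

private lemma norm_cos_sin (t : ℝ) (v : EuclideanSpace ℝ (Fin 2))
    (h0 : v 0 = Real.cos t) (h1 : v 1 = Real.sin t) : ‖v‖ = 1 := by
  rw [EuclideanSpace.norm_eq, Fin.sum_univ_two, h0, h1]
  simp [Real.norm_eq_abs, sq_abs, Real.sin_sq_add_cos_sq, Real.cos_sq_add_sin_sq]

theorem fejer_cluster_circle_example :
    let θ : ℕ → ℝ := fun n => ∑ k ∈ Finset.range n, (1 : ℝ) / (k + 1)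
    let x : ℕ → EuclideanSpace ℝ (Fin 2) := fun n => WithLp.toLp 2 ![Real.cos (θ n), Real.sin (θ n)]
    (Tendsto (fun n => x n - x (n + 1)) atTop (𝓝 0)) ∧
      (∀ c ∈ ({0} : Set (EuclideanSpace ℝ (Fin 2))), ∀ n : ℕ,
        ‖x (n + 1) - c‖ ≤ ‖x n - c‖) ∧
      {p : EuclideanSpace ℝ (Fin 2) |
          ∃ φ : ℕ → ℕ, StrictMono φ ∧ Tendsto (x ∘ φ) atTop (𝓝 p)} =
        {p : EuclideanSpace ℝ (Fin 2) | ‖p‖ = 1} := by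
  intro θ x
  have hθsucc : ∀ n, θ (n + 1) = θ n + 1 / (n + 1) := by
    intro n; simp [θ, Finset.sum_range_succ]
  have hθmono : StrictMono θ := by
    apply strictMono_nat_of_lt_succ
    intro n; rw [hθsucc]; exact lt_add_of_pos_right _ (by positivity)
  have hx0 : ∀ n, (x n) 0 = Real.cos (θ n) := fun n => rfl
  have hx1 : ∀ n, (x n) 1 = Real.sin (θ n) := fun n => rfl
  have hnorm : ∀ n, ‖x n‖ = 1 := fun n => norm_cos_sin (θ n) (x n) rfl rfl
  refine ⟨?_, ?_, ?_⟩
  · -- asymptotic regularity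
    rw [tendsto_zero_iff_norm_tendsto_zero]
    apply squeeze_zero (fun n => norm_nonneg _) (g := fun n : ℕ => 2 * (1 / (n + 1)))
    · intro n
      have hsub0 : (x n - x (n + 1)) 0 = Real.cos (θ n) - Real.cos (θ (n + 1)) := rfl
      have hsub1 : (x n - x (n + 1)) 1 = Real.sin (θ n) - Real.sin (θ (n + 1)) := rfl
      have h := norm2_le (x n - x (n + 1))
      rw [hsub0, hsub1] at h
      have habs : |θ n - θ (n + 1)| = 1 / (n + 1) := by
        have hd : θ n - θ (n + 1) = -(1 / (n + 1)) := by rw [hθsucc]; ring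
        rw [hd, abs_neg, abs_of_pos (by positivity)]
      calc ‖x n - x (n + 1)‖
          ≤ |Real.cos (θ n) - Real.cos (θ (n + 1))| +
            |Real.sin (θ n) - Real.sin (θ (n + 1))| := h
        _ ≤ |θ n - θ (n + 1)| + |θ n - θ (n + 1)| :=
            add_le_add (abs_cos_sub_cos_le _ _) (abs_sin_sub_sin_le _ _)
        _ = 2 * (1 / (n + 1)) := by rw [habs]; ring
    · have : Tendsto (fun n : ℕ => 1 / ((n : ℝ) + 1)) atTop (𝓝 0) :=
        tendsto_one_div_add_atTop_nhds_zero_nat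
      simpa using this.const_mul 2
  · -- Fejér monotone
    intro c hc n
    simp only [Set.mem_singleton_iff] at hc
    subst hc
    simp only [sub_zero, hnorm, le_refl]
  · -- cluster points
    ext p
    simp only [Set.mem_setOf_eq]
    constructor
    · rintro ⟨φ, hφ, hlim⟩
      have h1 : Tendsto (fun k => ‖(x ∘ φ) k‖) atTop (𝓝 ‖p‖) := hlim.norm
      have h2 : (fun k => ‖(x ∘ φ) k‖) = fun _ => (1 : ℝ) := by
        funext k; exact hnorm (φ k)
      rw [h2] at h1
      exact (tendsto_nhds_unique tendsto_const_nhds h1).symm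
    · intro hp
      -- represent p as (cos α, sin α)
      have hsum : (p 0) ^ 2 + (p 1) ^ 2 = 1 := by
        have := hp
        rw [EuclideanSpace.norm_eq, Fin.sum_univ_two] at this
        have h1 : ‖p 0‖ ^ 2 + ‖p 1‖ ^ 2 = 1 := by
          nlinarith [Real.sq_sqrt (show (0:ℝ) ≤ ‖p 0‖ ^ 2 + ‖p 1‖ ^ 2 by positivity), this]
        simpa [Real.norm_eq_abs, sq_abs] using h1
      obtain ⟨α, hcα, hsα⟩ : ∃ α, Real.cos α = p 0 ∧ Real.sin α = p 1 := by
        set z : ℂ := ⟨p 0, p 1⟩ with hz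
        have habs : ‖z‖ = 1 := by
          rw [Complex.norm_def, Complex.normSq_mk]
          rw [show p 0 * p 0 + p 1 * p 1 = 1 by nlinarith]
          exact Real.sqrt_one
        have hz0 : z ≠ 0 := by
          intro h; rw [h] at habs; simp at habs
        refine ⟨Complex.arg z, ?_, ?_⟩
        · rw [Complex.cos_arg hz0, habs]; simp [hz]
        · rw [Complex.sin_arg, habs]; simp [hz]
      -- frequently close
      have hfreq : ∀ m : ℕ, ∃ᶠ n in atTop, dist (x n) p < 1 / (m + 1) := by
        intro m
        rw [frequently_atTop]
        intro N
        set ε : ℝ := 1 / (m + 1) with hε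
        have hεpos : 0 < ε := by positivity
        -- choose N' ≥ N with 1/(N'+1) < ε/2
        obtain ⟨N', hN'⟩ := exists_nat_gt (2 / ε)
        set N'' := max N N' with hN''
        have hsmall : 1 / ((N'' : ℝ) + 1) < ε / 2 := by
          rw [div_lt_div_iff₀ (by positivity) (by norm_num)]
          have : (2 : ℝ) / ε < N'' + 1 := by
            have : (N' : ℝ) ≤ N'' := by exact_mod_cast le_max_right N N'
            linarith
          rw [div_lt_iff₀ hεpos] at this
          linarith
        -- choose integer multiple
        obtain ⟨M, hM⟩ := exists_nat_gt ((θ N'' - α) / (2 * Real.pi))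
        set t : ℝ := α + M * (2 * Real.pi) with ht
        have htge : θ N'' ≤ t := by
          rw [div_lt_iff₀ (by positivity : (0:ℝ) < 2 * Real.pi)] at hM
          rw [ht]; nlinarith
        -- find n with θ n ≤ t < θ (n+1)
        have hdiv : ∃ k, t < θ k := by
          have := Real.tendsto_sum_range_one_div_nat_succ_atTop
          have h2 := this.eventually_gt_atTop t
          exact h2.exists
        classical
        have hKpos : 0 < Nat.find hdiv := by
          rcases Nat.eq_zero_or_pos (Nat.find hdiv) with h | h
          · exfalso
            have hKlt : t < θ (Nat.find hdiv) := Nat.find_spec hdiv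
            rw [h] at hKlt
            have h0 : θ 0 = 0 := by simp [θ]
            rw [h0] at hKlt
            have : (0:ℝ) ≤ θ N'' := by
              rcases Nat.eq_zero_or_pos N'' with h1 | h1
              · simp [h1, θ]
              · have := hθmono h1; simp [θ] at this ⊢; linarith
            linarith
          · exact h
        obtain ⟨n, hn⟩ : ∃ n, Nat.find hdiv = n + 1 :=
          ⟨Nat.find hdiv - 1, (Nat.succ_pred_eq_of_pos hKpos).symm⟩
        have hKlt : t < θ (n + 1) := by rw [← hn]; exact Nat.find_spec hdiv
        have hnle : θ n ≤ t := by
          by_contra h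
          push_neg at h
          exact Nat.find_min hdiv (by omega) h
        have hnge : N ≤ n := by
          have : N'' < n + 1 := by
            by_contra h
            push_neg at h
            have := hθmono.le_iff_le.mpr h
            linarith [hθmono.le_iff_le.mpr h]
          have hN2 : N ≤ N'' := le_max_left N N'
          omega
        have hN''n : N'' ≤ n := by
          have : N'' < n + 1 := by
            by_contra h
            push_neg at h
            have := hθmono.le_iff_le.mpr h
            linarith
          omega
        refine ⟨n, hnge, ?_⟩
        have hgap : t - θ n < ε / 2 := by
          have h1 : θ (n + 1) - θ n = 1 / (n + 1) := by rw [hθsucc]; ring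
          have h2 : 1 / ((n : ℝ) + 1) ≤ 1 / ((N'' : ℝ) + 1) := by
            apply one_div_le_one_div_of_le (by positivity)
            have : (N'' : ℝ) ≤ n := by exact_mod_cast hN''n
            linarith
          linarith
        have hclose : |θ n - t| < ε / 2 := by
          rw [abs_sub_comm, abs_of_nonneg (by linarith)]
          exact hgap
        have hct : Real.cos t = p 0 := by
          rw [ht, show ((M : ℝ) * (2 * Real.pi)) = ((M : ℤ) : ℝ) * (2 * Real.pi) by push_cast; ring,
            Real.cos_add_int_mul_two_pi]
          exact hcα
        have hst : Real.sin t = p 1 := by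
          rw [ht, show ((M : ℝ) * (2 * Real.pi)) = ((M : ℤ) : ℝ) * (2 * Real.pi) by push_cast; ring,
            Real.sin_add_int_mul_two_pi]
          exact hsα
        rw [dist_eq_norm]
        have h := norm2_le (x n - p)
        have e0 : (x n - p) 0 = Real.cos (θ n) - p 0 := rfl
        have e1 : (x n - p) 1 = Real.sin (θ n) - p 1 := rfl
        rw [e0, e1] at h
        calc ‖x n - p‖ ≤ |Real.cos (θ n) - p 0| + |Real.sin (θ n) - p 1| := h
          _ = |Real.cos (θ n) - Real.cos t| + |Real.sin (θ n) - Real.sin t| := by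
              rw [hct, hst]
          _ ≤ |θ n - t| + |θ n - t| :=
              add_le_add (abs_cos_sub_cos_le _ _) (abs_sin_sub_sin_le _ _)
          _ < ε := by linarith
      obtain ⟨φ, hφmono, hφ⟩ := Filter.extraction_forall_of_frequently hfreq
      refine ⟨φ, hφmono, ?_⟩
      rw [tendsto_iff_dist_tendsto_zero]
      apply squeeze_zero (fun k => dist_nonneg) (fun k => le_of_lt (hφ k))
      exact tendsto_one_div_add_atTop_nhds_zero_nat
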